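/- Let f : Fin n → ℝ≥0 and g : Fin n → ℝ≥0 be such that g is obtained from f by changing exactly two values: g(x) = x', g(y) = y' with f(x) + f(y) ≤ x' + y' and max(f(x), f(y)) ≤ max(x', y'), and g agrees with f elsewhere. Then for all k ∈ {1,...,n}, the sum of the k largest values of f is at most the sum of the k largest values of g. -/

import Mathlib

/-- The `k`-centrum value of `f`: the largest possible sum of `f` over a subset of size `k`
(i.e. the sum of the `k` largest values of `f`). -/
noncomputable def kSum (n k : ℕ) (f : Fin n → ℝ) : ℝ :=
  sSup {x : ℝ | ∃ S : Finset (Fin n), S.card = k ∧ x = ∑ i ∈ S, f i}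

/-- Helper: if exactly `x` (not `y`) lies in `S`, replace `S` by a set of the same size with
sum of `g` at least the sum of `f` over `S`. -/
lemma one_in_aux (n : ℕ) (f g : Fin n → ℝ) (x y : Fin n)
    (hmax' : f x ≤ max (g x) (g y))
    (hrest : ∀ i, i ≠ x → i ≠ y → g i = f i)
    (S : Finset (Fin n)) (hx : x ∈ S) (hy : y ∉ S) :
    ∃ T : Finset (Fin n), T.card = S.card ∧ ∑ i ∈ S, f i ≤ ∑ i ∈ T, g i := by
  have hrestsum : ∑ i ∈ S.erase x, g i = ∑ i ∈ S.erase x, f i := by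
    apply Finset.sum_congr rfl
    intro i hi
    exact hrest i (Finset.ne_of_mem_erase hi) (fun h => hy (h ▸ Finset.mem_of_mem_erase hi))
  have hSf : ∑ i ∈ S, f i = f x + ∑ i ∈ S.erase x, f i :=
    (Finset.add_sum_erase S f hx).symm
  by_cases hc : g y ≤ g x
  · refine ⟨S, rfl, ?_⟩
    have hSg : ∑ i ∈ S, g i = g x + ∑ i ∈ S.erase x, g i :=
      (Finset.add_sum_erase S g hx).symm
    rw [hSf, hSg, hrestsum]
    have : f x ≤ g x := le_trans hmax' (max_le le_rfl hc)
    linarith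
  · push_neg at hc
    refine ⟨insert y (S.erase x), ?_, ?_⟩
    · rw [Finset.card_insert_of_notMem (fun h => hy (Finset.mem_of_mem_erase h)),
        Finset.card_erase_of_mem hx]
      have h1 : 1 ≤ S.card := Finset.card_pos.mpr ⟨x, hx⟩
      omega
    · rw [Finset.sum_insert (fun h => hy (Finset.mem_of_mem_erase h)), hrestsum, hSf]
      have : f x ≤ g y := le_trans hmax' (max_le hc.le le_rfl)
      linarith

/-- A two-element replacement that weakly increases both the sum and the max of the two
replaced values weakly increases the sum of the `k` largest values, for every `k`. -/
theorem stmt_19 (n : ℕ) (f g : Fin n → ℝ) (x y : Fin n) (hxy : x ≠ y) (x' y' : ℝ)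
    (hf : ∀ i, 0 ≤ f i) (hg : ∀ i, 0 ≤ g i)
    (hgx : g x = x') (hgy : g y = y')
    (hrest : ∀ i, i ≠ x → i ≠ y → g i = f i)
    (hsum : f x + f y ≤ x' + y') (hmax : max (f x) (f y) ≤ max x' y')
    (k : ℕ) (hk1 : 1 ≤ k) (hkn : k ≤ n) :
    kSum n k f ≤ kSum n k g := by
  -- key exchange lemma
  have key : ∀ S : Finset (Fin n), S.card = k →
      ∃ T : Finset (Fin n), T.card = k ∧ ∑ i ∈ S, f i ≤ ∑ i ∈ T, g i := by
    intro S hS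
    by_cases hx : x ∈ S <;> by_cases hy : y ∈ S
    · -- both in S
      refine ⟨S, hS, ?_⟩
      have hyx : y ∈ S.erase x := Finset.mem_erase.mpr ⟨Ne.symm hxy, hy⟩
      have hSf : ∑ i ∈ S, f i = f x + (f y + ∑ i ∈ (S.erase x).erase y, f i) := by
        rw [Finset.add_sum_erase _ f hyx, Finset.add_sum_erase _ f hx]
      have hSg : ∑ i ∈ S, g i = g x + (g y + ∑ i ∈ (S.erase x).erase y, g i) := by
        rw [Finset.add_sum_erase _ g hyx, Finset.add_sum_erase _ g hx]
      have hrestsum : ∑ i ∈ (S.erase x).erase y, g i = ∑ i ∈ (S.erase x).erase y, f i := by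
        apply Finset.sum_congr rfl
        intro i hi
        exact hrest i (Finset.ne_of_mem_erase (Finset.mem_of_mem_erase hi))
          (Finset.ne_of_mem_erase hi)
      rw [hSf, hSg, hrestsum, hgx, hgy]
      linarith
    · -- only x
      obtain ⟨T, hT, hle⟩ := one_in_aux n f g x y
        (le_trans (le_max_left _ _) (by rw [hgx, hgy]; exact hmax)) hrest S hx hy
      exact ⟨T, hT ▸ hS, hle⟩
    · -- only y
      obtain ⟨T, hT, hle⟩ := one_in_aux n f g y x
        (by rw [hgy, hgx, max_comm y' x']; exact le_trans (le_max_right _ _) hmax)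
        (fun i h1 h2 => hrest i h2 h1) S hy hx
      exact ⟨T, hT ▸ hS, hle⟩
    · -- neither
      refine ⟨S, hS, le_of_eq (Finset.sum_congr rfl fun i hi => ?_).symm⟩
      exact hrest i (fun h => hx (h ▸ hi)) (fun h => hy (h ▸ hi))
  -- the sets are nonempty and bounded above
  obtain ⟨S0, _, hS0⟩ := Finset.exists_subset_card_eq (s := (Finset.univ : Finset (Fin n))) (n := k)
    (by simpa using hkn)
  have hne : {x : ℝ | ∃ S : Finset (Fin n), S.card = k ∧ x = ∑ i ∈ S, f i}.Nonempty :=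
    ⟨∑ i ∈ S0, f i, S0, hS0, rfl⟩
  have hbdd : BddAbove {x : ℝ | ∃ S : Finset (Fin n), S.card = k ∧ x = ∑ i ∈ S, g i} := by
    apply Set.Finite.bddAbove
    apply Set.Finite.subset
      (Finset.finite_toSet ((Finset.univ.powersetCard k).image fun S => ∑ i ∈ S, g i))
    rintro a ⟨S, hS, rfl⟩
    simp only [Finset.coe_image, Set.mem_image, Finset.mem_coe, Finset.mem_powersetCard]
    exact ⟨S, by simp [hS], rfl⟩
  apply csSup_le hne
  rintro a ⟨S, hS, rfl⟩
  obtain ⟨T, hT, hle⟩ := key S hS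
  exact le_trans hle (le_csSup hbdd ⟨T, hT, rfl⟩)
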